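/- Consider the dyadic splitting process on [−1,1]^m with splitting threshold parameter b > 0: a region of side 2^{−ℓ} splits into 2^m subregions once it has received 2^{bℓ} queries. After n total queries, the number of regions that have ever split is at most 4^m · n^{m/(m+b)}, and the total number of regions ever created is at most 9^m · n^{m/(m+b)}. -/

import Mathlib

set_option maxHeartbeats 1000000


/-- Region-count bound for the dyadic splitting process on `[-1,1]^m`: if `K ℓ` is the
number of depth-`ℓ` regions (side `2^{-ℓ}`) that have ever split, then the geometry gives
`K ℓ ≤ 2^{mℓ}` and, since splitting a depth-`ℓ` region requires `2^{bℓ}` queries and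
there are `n` queries in total, `∑ 2^{bℓ} K ℓ ≤ n`. Under these constraints, the number
of regions that have ever split satisfies `∑ K ℓ ≤ 4^m n^{m/(m+b)}`, and the total number
of regions ever created — the initial region plus the `2^m` children of each split —
is at most `9^m n^{m/(m+b)}`. -/
theorem dyadic_splitting_region_count (m : ℕ) (hm : 1 ≤ m) (b : ℝ) (hb : 0 < b)
    (n : ℕ) (hn : 1 ≤ n)
    (K : ℕ → ℕ) (hK0 : K 0 = 0)
    (hKle : ∀ ℓ : ℕ, 1 ≤ ℓ → (K ℓ : ℝ) ≤ 2 ^ (m * ℓ))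
    (hbudget_sum : Summable (fun ℓ : ℕ => (2 : ℝ) ^ (b * ℓ) * K ℓ))
    (hbudget : (∑' ℓ : ℕ, (2 : ℝ) ^ (b * ℓ) * K ℓ) ≤ n) :
    (∑' ℓ : ℕ, (K ℓ : ℝ)) ≤ 4 ^ m * (n : ℝ) ^ ((m : ℝ) / (m + b)) ∧
      1 + 2 ^ m * (∑' ℓ : ℕ, (K ℓ : ℝ)) ≤ 9 ^ m * (n : ℝ) ^ ((m : ℝ) / (m + b)) := by
  have hmb : (0:ℝ) < (m:ℝ) + b := by positivity
  have hn1 : (1:ℝ) ≤ (n:ℝ) := by exact_mod_cast hn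
  have hn0 : (0:ℝ) < (n:ℝ) := lt_of_lt_of_le one_pos hn1
  set t : ℝ := (n:ℝ) ^ ((1:ℝ)/((m:ℝ)+b)) with ht
  have ht1 : 1 ≤ t := Real.one_le_rpow hn1 (by positivity)
  have ht0 : 0 < t := lt_of_lt_of_le one_pos ht1
  set A : ℝ := (n:ℝ) ^ ((m:ℝ)/((m:ℝ)+b)) with hA
  have hA1 : 1 ≤ A := Real.one_le_rpow hn1 (by positivity)
  have hA0 : 0 ≤ A := le_trans zero_le_one hA1
  have hAt : t ^ m = A := by
    rw [ht, hA, ← Real.rpow_natCast ((n:ℝ) ^ ((1:ℝ)/((m:ℝ)+b))) m,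
      ← Real.rpow_mul (le_of_lt hn0)]
    congr 1
    field_simp
  set L : ℕ := Nat.floor (Real.logb 2 t) with hL
  have hlogb0 : 0 ≤ Real.logb 2 t := Real.logb_nonneg one_lt_two ht1
  have h2Lt : (2:ℝ) ^ L ≤ t := by
    calc (2:ℝ)^L = (2:ℝ)^(L:ℝ) := (Real.rpow_natCast 2 L).symm
    _ ≤ (2:ℝ)^(Real.logb 2 t) :=
        Real.rpow_le_rpow_of_exponent_le one_le_two (Nat.floor_le hlogb0)
    _ = t := Real.rpow_logb two_pos (by norm_num) ht0
  have htL : t ≤ (2:ℝ) ^ ((L:ℝ)+1) := by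
    calc t = (2:ℝ)^(Real.logb 2 t) := (Real.rpow_logb two_pos (by norm_num) ht0).symm
    _ ≤ (2:ℝ)^((L:ℝ)+1) :=
        Real.rpow_le_rpow_of_exponent_le one_le_two (le_of_lt (Nat.lt_floor_add_one _))
  -- summability of K
  have hKnn : ∀ ℓ : ℕ, (0:ℝ) ≤ (K ℓ : ℝ) := fun ℓ => Nat.cast_nonneg _
  have hone_le : ∀ ℓ : ℕ, (1:ℝ) ≤ (2:ℝ) ^ (b * (ℓ:ℝ)) := fun ℓ =>
    Real.one_le_rpow one_le_two (by positivity)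
  have hKsum : Summable (fun ℓ : ℕ => (K ℓ : ℝ)) := by
    refine Summable.of_nonneg_of_le hKnn (fun ℓ => ?_) hbudget_sum
    calc (K ℓ : ℝ) = 1 * K ℓ := (one_mul _).symm
    _ ≤ (2:ℝ) ^ (b * ℓ) * K ℓ := mul_le_mul_of_nonneg_right (hone_le ℓ) (hKnn ℓ)
  -- every K ℓ ≤ (2^m)^ℓ, including ℓ = 0
  have hKall : ∀ ℓ : ℕ, (K ℓ : ℝ) ≤ ((2:ℝ) ^ m) ^ ℓ := by
    intro ℓ
    rcases Nat.eq_zero_or_pos ℓ with h | h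
    · simp [h, hK0]
    · calc (K ℓ : ℝ) ≤ 2 ^ (m * ℓ) := hKle ℓ h
      _ = ((2:ℝ) ^ m) ^ ℓ := by rw [pow_mul]
  -- head bound
  have hc2 : (2:ℝ) ≤ (2:ℝ) ^ m := by
    calc (2:ℝ) = 2 ^ 1 := (pow_one 2).symm
    _ ≤ 2 ^ m := pow_le_pow_right₀ one_le_two hm
  have hcpos : (0:ℝ) < (2:ℝ) ^ m := by positivity
  have hhead : ∑ ℓ ∈ Finset.range (L+1), (K ℓ : ℝ) ≤ 2 * A := by
    have h1 : ∑ ℓ ∈ Finset.range (L+1), (K ℓ : ℝ)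
        ≤ ∑ ℓ ∈ Finset.range (L+1), ((2:ℝ) ^ m) ^ ℓ :=
      Finset.sum_le_sum fun ℓ _ => hKall ℓ
    have h2 : ∑ ℓ ∈ Finset.range (L+1), ((2:ℝ) ^ m) ^ ℓ
        = (((2:ℝ)^m) ^ (L+1) - 1) / ((2:ℝ)^m - 1) :=
      geom_sum_eq (by nlinarith) (L+1)
    have h3 : (((2:ℝ)^m) ^ (L+1) - 1) / ((2:ℝ)^m - 1) ≤ 2 * ((2:ℝ)^m) ^ L := by
      rw [div_le_iff₀ (by nlinarith)]
      have hp : (0:ℝ) < ((2:ℝ)^m) ^ L := by positivity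
      have : ((2:ℝ)^m) ^ (L+1) = (2:ℝ)^m * ((2:ℝ)^m) ^ L := by ring
      nlinarith
    have h4 : ((2:ℝ)^m) ^ L ≤ A := by
      calc ((2:ℝ)^m) ^ L = ((2:ℝ)^L) ^ m := by rw [← pow_mul, ← pow_mul, Nat.mul_comm]
      _ ≤ t ^ m := pow_le_pow_left₀ (by positivity) h2Lt m
      _ = A := hAt
    linarith
  -- tail bound
  have hbnn : ∀ ℓ : ℕ, (0:ℝ) ≤ (2:ℝ) ^ (b * (ℓ:ℝ)) * K ℓ := fun ℓ => by positivity
  have htail_budget : ∑' ℓ : ℕ, (2:ℝ) ^ (b * ((ℓ + (L+1) : ℕ):ℝ)) * K (ℓ + (L+1)) ≤ n := by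
    have := Summable.sum_add_tsum_nat_add (f := fun ℓ : ℕ => (2:ℝ) ^ (b * ℓ) * K ℓ) (L+1) hbudget_sum
    have hhnn : 0 ≤ ∑ ℓ ∈ Finset.range (L+1), (2:ℝ) ^ (b * (ℓ:ℝ)) * K ℓ :=
      Finset.sum_nonneg fun ℓ _ => hbnn ℓ
    linarith
  have htail : ∑' ℓ : ℕ, (K (ℓ + (L+1)) : ℝ) ≤ A := by
    have hterm : ∀ ℓ : ℕ, (K (ℓ + (L+1)) : ℝ)
        ≤ (2:ℝ) ^ (-(b * ((L:ℝ)+1))) * ((2:ℝ) ^ (b * ((ℓ + (L+1) : ℕ):ℝ)) * K (ℓ + (L+1))) := by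
      intro ℓ
      rw [← mul_assoc, ← Real.rpow_add two_pos]
      have he : -(b * ((L:ℝ)+1)) + b * ((ℓ + (L+1) : ℕ):ℝ) = b * ℓ := by
        push_cast; ring
      rw [he]
      calc (K (ℓ + (L+1)) : ℝ) = 1 * K (ℓ + (L+1)) := (one_mul _).symm
      _ ≤ (2:ℝ) ^ (b * (ℓ:ℝ)) * K (ℓ + (L+1)) :=
          mul_le_mul_of_nonneg_right (hone_le ℓ) (hKnn _)
    have hsum2 : Summable (fun ℓ : ℕ => (2:ℝ) ^ (b * ((ℓ + (L+1) : ℕ):ℝ)) * K (ℓ + (L+1))) :=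
      (summable_nat_add_iff (L+1)).2 hbudget_sum
    calc ∑' ℓ : ℕ, (K (ℓ + (L+1)) : ℝ)
        ≤ ∑' ℓ : ℕ, (2:ℝ) ^ (-(b * ((L:ℝ)+1))) *
            ((2:ℝ) ^ (b * ((ℓ + (L+1) : ℕ):ℝ)) * K (ℓ + (L+1))) :=
          Summable.tsum_le_tsum hterm ((summable_nat_add_iff (L+1)).2 hKsum) (hsum2.mul_left _)
    _ = (2:ℝ) ^ (-(b * ((L:ℝ)+1))) *
          ∑' ℓ : ℕ, (2:ℝ) ^ (b * ((ℓ + (L+1) : ℕ):ℝ)) * K (ℓ + (L+1)) := tsum_mul_left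
    _ ≤ (2:ℝ) ^ (-(b * ((L:ℝ)+1))) * n := by
        refine mul_le_mul_of_nonneg_left htail_budget (by positivity)
    _ ≤ t ^ (-b) * n := by
        refine mul_le_mul_of_nonneg_right ?_ (le_of_lt hn0)
        have : (2:ℝ) ^ (-(b * ((L:ℝ)+1))) = ((2:ℝ) ^ ((L:ℝ)+1)) ^ (-b) := by
          rw [← Real.rpow_mul (by norm_num : (0:ℝ) ≤ 2)]
          congr 1; ring
        rw [this]
        exact Real.rpow_le_rpow_of_nonpos ht0 htL (by linarith)
    _ = A := by
        rw [ht, hA, ← Real.rpow_mul (le_of_lt hn0)]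
        nth_rewrite 2 [show (n:ℝ) = (n:ℝ) ^ (1:ℝ) from (Real.rpow_one _).symm]
        rw [← Real.rpow_add hn0]
        congr 1
        field_simp
        ring
  -- combine
  have hsplit := Summable.sum_add_tsum_nat_add (f := fun ℓ : ℕ => (K ℓ : ℝ)) (L+1) hKsum
  have hS : (∑' ℓ : ℕ, (K ℓ : ℝ)) ≤ 3 * A := by
    rw [← hsplit]; linarith
  have h34 : (3:ℝ) ≤ 4 ^ m := by
    calc (3:ℝ) ≤ 4 ^ 1 := by norm_num
    _ ≤ 4 ^ m := pow_le_pow_right₀ (by norm_num) hm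
  have hfirst : (∑' ℓ : ℕ, (K ℓ : ℝ)) ≤ 4 ^ m * A := by
    calc (∑' ℓ : ℕ, (K ℓ : ℝ)) ≤ 3 * A := hS
    _ ≤ 4 ^ m * A := mul_le_mul_of_nonneg_right h34 hA0
  refine ⟨hfirst, ?_⟩
  have h89 : (8:ℝ) ^ m + 1 ≤ 9 ^ m := by
    have : (8:ℕ) ^ m < 9 ^ m := Nat.pow_lt_pow_left (by norm_num) (by omega)
    have h : (8:ℕ) ^ m + 1 ≤ 9 ^ m := this
    exact_mod_cast h
  have hSnn : 0 ≤ (∑' ℓ : ℕ, (K ℓ : ℝ)) := tsum_nonneg hKnn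
  calc 1 + 2 ^ m * (∑' ℓ : ℕ, (K ℓ : ℝ)) ≤ 1 + 2 ^ m * (4 ^ m * A) := by
        have := mul_le_mul_of_nonneg_left hfirst (le_of_lt hcpos)
        linarith
  _ = 1 + 8 ^ m * A := by rw [← mul_assoc, ← mul_pow]; norm_num
  _ ≤ 9 ^ m * A := by nlinarith
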